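/- Let k₁, k₂, d, w, z be integers with k₁ ≠ 0, d ≠ 0, w ≠ 0, and set s = d/w. Let γ = (√5 − 1)/2 be the golden ratio and define Γ = −k₂/k₁ − s/(z + γ). Then there exists a constant C > 0 such that for all integers m₁, m₂ with m₁ ≠ 0, one has |m₁ Γ + m₂| ≥ C/|m₁|. -/

import Mathlib

open Polynomial in
/-- the sequence element Γ = −k₂/k₁ − s/(z + γ), with s = d/w rational
and γ the golden ratio, satisfies the strong Diophantine condition. -/
theorem gamma_strong_diophantine
    (k₁ k₂ d w z : ℤ) (hk₁ : k₁ ≠ 0) (hd : d ≠ 0) (hw : w ≠ 0)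
    (s γ Γ : ℝ)
    (hs : s = (d : ℝ) / (w : ℝ))
    (hγ : γ = (Real.sqrt 5 - 1) / 2)
    (hΓ : Γ = -(k₂ : ℝ) / (k₁ : ℝ) - s / ((z : ℝ) + γ)) :
    ∃ C : ℝ, 0 < C ∧ ∀ m₁ m₂ : ℤ, m₁ ≠ 0 →
      C / |(m₁ : ℝ)| ≤ |(m₁ : ℝ) * Γ + (m₂ : ℝ)| := by
  have h5 : Irrational (Real.sqrt 5) := (by norm_num : Nat.Prime 5).irrational_sqrt
  have hγirr : Irrational γ := by
    rw [hγ]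
    have := (h5.sub_intCast 1).div_intCast (m := 2) (by norm_num)
    convert this using 2 <;> push_cast <;> ring
  have hk' : (k₁ : ℝ) ≠ 0 := Int.cast_ne_zero.mpr hk₁
  have hw' : (w : ℝ) ≠ 0 := Int.cast_ne_zero.mpr hw
  have hd' : (d : ℝ) ≠ 0 := Int.cast_ne_zero.mpr hd
  have ht0 : ((z : ℝ) + γ) ≠ 0 := (hγirr.intCast_add z).ne_zero
  have hsq : γ ^ 2 + γ - 1 = 0 := by
    have h5' : Real.sqrt 5 ^ 2 = 5 := Real.sq_sqrt (by norm_num)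
    rw [hγ]; nlinarith [h5']
  -- the quadratic equation satisfied by z + γ
  have ht : ((z : ℝ) + γ) ^ 2 = (2 * z - 1) * ((z : ℝ) + γ) + (1 + z - z ^ 2) := by
    linear_combination hsq
  set N : ℤ := 1 + z - z ^ 2 with hN
  have hN0 : N ≠ 0 := by
    intro h
    have h2 : z * (z - 1) = 1 := by linear_combination -h
    rcases Int.isUnit_iff.mp (IsUnit.of_mul_eq_one _ h2) with rfl | rfl <;> omega
  set A : ℤ := N * w ^ 2 * k₁ ^ 2 with hA
  set B : ℤ := 2 * N * w ^ 2 * k₁ * k₂ - (2 * z - 1) * d * w * k₁ ^ 2 with hB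
  set Cc : ℤ := N * w ^ 2 * k₂ ^ 2 - (2 * z - 1) * d * w * k₁ * k₂ - d ^ 2 * k₁ ^ 2 with hCc
  have hA0 : A ≠ 0 := by
    simp only [hA]; positivity
  have key : (A : ℝ) * Γ ^ 2 + (B : ℝ) * Γ + (Cc : ℝ) = 0 := by
    rw [hΓ, hs, hA, hB, hCc, hN]
    push_cast
    field_simp
    linear_combination ((d : ℝ) ^ 2 * k₁ ^ 2) * ht -
      (2 * (k₁ : ℝ) ^ 2 * d ^ 2) * hsq
  -- Γ is irrational
  have hΓirr : Irrational Γ := by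
    have h1 : Irrational (((z : ℝ) + γ)⁻¹) := (hγirr.intCast_add z).inv
    have hq : ((d : ℚ) / w) ≠ 0 := div_ne_zero (by exact_mod_cast hd) (by exact_mod_cast hw)
    have h2 : Irrational ((((d : ℚ) / w : ℚ) : ℝ) * ((z : ℝ) + γ)⁻¹) := h1.ratCast_mul hq
    have h3 := h2.neg.ratCast_add (-(k₂ / k₁ : ℚ))
    have : ((-(k₂ / k₁ : ℚ) : ℚ) : ℝ) + -((((d : ℚ) / w : ℚ) : ℝ) * ((z : ℝ) + γ)⁻¹) = Γ := by
      rw [hΓ, hs]; push_cast; ring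
    rwa [this] at h3
  -- apply the Liouville-type estimate for irrational algebraic numbers
  set f : ℤ[X] := Polynomial.C A * Polynomial.X ^ 2 + Polynomial.C B * Polynomial.X
      + Polynomial.C Cc with hf
  have hfd : f.natDegree = 2 := Polynomial.natDegree_quadratic hA0
  have hf0 : f ≠ 0 := fun h => by simp [h] at hfd
  have hfeval : Polynomial.eval Γ (Polynomial.map (algebraMap ℤ ℝ) f) = 0 := by
    rw [hf]
    simp only [Polynomial.map_add, Polynomial.map_mul, Polynomial.map_pow,
      Polynomial.map_C, Polynomial.map_X]
    simp only [Polynomial.eval_add, Polynomial.eval_mul, Polynomial.eval_pow,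
      Polynomial.eval_C, Polynomial.eval_X, eq_intCast]
    exact key
  obtain ⟨A0, hA0pos, hAll⟩ := Liouville.exists_pos_real_of_irrational_root hΓirr hf0 hfeval
  refine ⟨1 / A0, by positivity, fun m₁ m₂ hm => ?_⟩
  have hm' : (m₁ : ℝ) ≠ 0 := Int.cast_ne_zero.mpr hm
  have habs : 0 < |(m₁ : ℝ)| := abs_pos.mpr hm'
  set b : ℕ := m₁.natAbs - 1 with hb
  have hb1 : ((b : ℝ) + 1) = |(m₁ : ℝ)| := by
    have h1 : (b + 1 : ℕ) = m₁.natAbs := by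
      have := Int.natAbs_pos.mpr hm; omega
    calc ((b : ℝ) + 1) = ((b + 1 : ℕ) : ℝ) := by push_cast; ring
      _ = |(m₁ : ℝ)| := by rw [h1, Nat.cast_natAbs]; push_cast; ring
  set a : ℤ := if 0 < m₁ then -m₂ else m₂ with ha
  have ha1 : (a : ℝ) / ((b : ℝ) + 1) = -(m₂ : ℝ) / (m₁ : ℝ) := by
    rw [hb1, ha]
    rcases lt_or_ge 0 m₁ with h | h
    · rw [if_pos h, abs_of_pos (by exact_mod_cast h)]; push_cast; ring
    · rw [if_neg (not_lt.mpr h),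
        abs_of_neg (by exact_mod_cast h.lt_of_ne hm)]
      push_cast
      rw [div_neg, neg_div]
  have hkey := hAll a b
  rw [hfd, ha1, hb1] at hkey
  have hdiff : Γ - -(m₂ : ℝ) / (m₁ : ℝ) = ((m₁ : ℝ) * Γ + m₂) / m₁ := by
    field_simp
    ring
  rw [hdiff, abs_div] at hkey
  rw [div_le_iff₀ habs, one_div, inv_le_iff_one_le_mul₀ hA0pos]
  calc (1 : ℝ) ≤ |(m₁ : ℝ)| ^ 2 * (|(m₁ : ℝ) * Γ + m₂| / |(m₁ : ℝ)| * A0) := hkey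
    _ = |(m₁ : ℝ) * Γ + m₂| * |(m₁ : ℝ)| * A0 := by
        field_simp
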